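/- arXiv:0812.2596 — 6 statements merged into one kernel-verified Lean document; each statement's English description precedes it below -/
import Mathlib

section
/- If N = 2^e·t + 1 with t odd and 2^e > t > 0, and there exists an integer a with a^((N-1)/2) ≡ -1 (mod N), then N is prime. -/
lemma proth_aux_two_pow_dvd (e t d : ℕ) (ht : Odd t) (he : 1 ≤ e)
    (hd : d ∣ 2 ^ e * t) (hnd : ¬ d ∣ 2 ^ (e - 1) * t) : 2 ^ e ∣ d := by
  have htpos : 0 < t := ht.pos
  have hd0 : d ≠ 0 := by
    rintro rfl
    have h1 := zero_dvd_iff.mp hd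
    have h2 : 0 < 2 ^ e * t := by positivity
    omega
  have ht2 : ¬ (2 ∣ t) := by
    rw [Nat.two_dvd_ne_zero]; exact Nat.odd_iff.mp ht
  have hfact : (2 ^ e * t).factorization 2 = e := by
    rw [Nat.factorization_mul (by positivity) htpos.ne',
      Nat.Prime.factorization_pow Nat.prime_two]
    simp [Nat.factorization_eq_zero_of_not_dvd ht2]
  by_contra hcon
  set k := d.factorization 2 with hk
  have hkd : 2 ^ k ∣ d := Nat.ordProj_dvd d 2
  have hkle : k ≤ e - 1 := by
    by_contra hkgt
    push_neg at hkgt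
    exact hcon (dvd_trans (pow_dvd_pow 2 (by omega)) hkd)
  have hcompl : (2 ^ e * t) / 2 ^ ((2 ^ e * t).factorization 2) = t := by
    rw [hfact, Nat.mul_div_cancel_left _ (by positivity)]
  have hcd : d / 2 ^ k ∣ t := by
    have := Nat.ordCompl_dvd_ordCompl_of_dvd hd 2
    rwa [hcompl] at this
  apply hnd
  have : d = 2 ^ k * (d / 2 ^ k) := (Nat.mul_div_cancel' hkd).symm
  rw [this]
  exact mul_dvd_mul (pow_dvd_pow 2 hkle) hcd

lemma proth_aux_factor (N e t : ℕ) (ht : Odd t) (htpos : 0 < t) (hlt : t < 2 ^ e)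
    (hN : N = 2 ^ e * t + 1) (a : ℤ) (haN : (a : ZMod N) ^ ((N - 1) / 2) = -1)
    (p : ℕ) (hp : p.Prime) (hpN : p ∣ N) : 2 ^ e + 1 ≤ p := by
  have he : 1 ≤ e := by
    by_contra h
    interval_cases e <;> omega
  have hM : (N - 1) / 2 = 2 ^ (e - 1) * t := by
    subst hN
    rw [Nat.add_sub_cancel]
    rw [show (2:ℕ) ^ e = 2 * 2 ^ (e - 1) by
      rw [← pow_succ']; congr 1; omega]
    rw [mul_assoc, Nat.mul_div_cancel_left _ (by norm_num)]
  have hNodd : Odd N := by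
    subst hN
    have : Even (2 ^ e * t) := by
      apply Even.mul_right
      exact (Nat.even_pow.mpr ⟨even_two, by omega⟩)
    exact Even.add_one this
  have hp2 : p ≠ 2 := by
    rintro rfl
    rw [Nat.odd_iff] at hNodd
    omega
  have hp3 : 3 ≤ p := by
    have := hp.two_le
    omega
  haveI : Fact p.Prime := ⟨hp⟩
  haveI : Fact (2 < p) := ⟨by omega⟩
  set b : ZMod p := ZMod.castHom hpN (ZMod p) (a : ZMod N) with hb
  have hbM : b ^ ((N - 1) / 2) = -1 := by
    rw [hb, ← map_pow, haN, map_neg, map_one]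
  have hne : (-1 : ZMod p) ≠ 1 := ZMod.neg_one_ne_one
  have hb2M : b ^ (2 ^ e * t) = 1 := by
    have : (2:ℕ) ^ e * t = ((N - 1) / 2) * 2 := by
      rw [hM, show (2:ℕ) ^ e = 2 ^ (e-1) * 2 by rw [← pow_succ]; congr 1; omega]
      ring
    rw [this, pow_mul, hbM]; ring
  have hd1 : orderOf b ∣ 2 ^ e * t := orderOf_dvd_of_pow_eq_one hb2M
  have hd2 : ¬ orderOf b ∣ 2 ^ (e - 1) * t := by
    rw [← hM, orderOf_dvd_iff_pow_eq_one, hbM]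
    exact hne
  have h2e : 2 ^ e ∣ orderOf b := proth_aux_two_pow_dvd e t _ ht he hd1 hd2
  have hbne : b ≠ 0 := by
    intro h0
    have hM0 : (N - 1) / 2 ≠ 0 := by rw [hM]; positivity
    rw [h0, zero_pow hM0] at hbM
    exact neg_ne_zero.mpr one_ne_zero hbM.symm
  have hfermat : b ^ (p - 1) = 1 := ZMod.pow_card_sub_one_eq_one hbne
  have hdp : orderOf b ∣ p - 1 := orderOf_dvd_of_pow_eq_one hfermat
  have h2ep : 2 ^ e ∣ p - 1 := h2e.trans hdp
  have : 2 ^ e ≤ p - 1 := Nat.le_of_dvd (by omega) h2ep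
  omega

/-- Proth's theorem: if `N = 2^e * t + 1` with `t` odd and `2^e > t > 0`, and some
integer `a` satisfies `a^((N-1)/2) ≡ -1 (mod N)`, then `N` is prime. -/
theorem proth_theorem (N e t : ℕ) (ht : Odd t) (htpos : 0 < t) (hlt : t < 2 ^ e)
    (hN : N = 2 ^ e * t + 1) (ha : ∃ a : ℤ, (a : ZMod N) ^ ((N - 1) / 2) = -1) :
    N.Prime := by
  obtain ⟨a, haN⟩ := ha
  have hN2 : 2 ≤ N := by nlinarith [pow_pos (show (0:ℕ) < 2 by norm_num) e]
  set p := N.minFac with hp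
  have hpp : p.Prime := Nat.minFac_prime (by omega)
  have hpN : p ∣ N := Nat.minFac_dvd N
  have hple : 2 ^ e + 1 ≤ p := proth_aux_factor N e t ht htpos hlt hN a haN p hpp hpN
  have hNp : N = p * (N / p) := (Nat.mul_div_cancel' hpN).symm
  rcases Nat.lt_or_ge (N / p) 2 with h1 | h1
  · have : N / p = 1 := by
      have : 0 < N / p := Nat.div_pos (Nat.minFac_le (by omega)) (hpp.pos)
      omega
    rw [this, mul_one] at hNp
    rw [hNp]; exact hpp
  · exfalso
    set q := (N / p).minFac with hq
    have hqp : q.Prime := Nat.minFac_prime (by omega)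
    have hqdvd : q ∣ N := (Nat.minFac_dvd _).trans (Nat.div_dvd_of_dvd hpN)
    have hqle : 2 ^ e + 1 ≤ q := proth_aux_factor N e t ht htpos hlt hN a haN q hqp hqdvd
    have hqNp : q ≤ N / p := Nat.minFac_le (by omega)
    have : (2 ^ e + 1) * (2 ^ e + 1) ≤ N := by
      calc (2 ^ e + 1) * (2 ^ e + 1) ≤ p * q := Nat.mul_le_mul hple hqle
        _ ≤ p * (N / p) := Nat.mul_le_mul_left p hqNp
        _ = N := hNp.symm
    nlinarith [pow_pos (show (0:ℕ) < 2 by norm_num) e]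
end

section
/- Let N be an odd prime and let α be an integer with α² ≢ 0 (mod N). Define G'_α to be the set of residues a mod N with a ≢ ±α (mod N), and G_α = G'_α ∪ {∞}, with operation: ∞ is the identity, [a]·[-a] = ∞, and [a₁]·[a₂] = [(a₁a₂ + α²)(a₁ + a₂)^(-1)] when a₁ + a₂ ≢ 0 (mod N). Then the map ψ : G_α → (Z/NZ)^× sending ∞ to 1 and [a] to (a+α)(a-α)^(-1) is a group isomorphism. -/
/-- The group operation on `G_α`: `∞` (encoded as `none`) is the identity,
`[a]·[-a] = ∞`, and `[a₁]·[a₂] = [(a₁a₂ + α²)(a₁+a₂)⁻¹]` otherwise. -/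
def gmulFn {N : ℕ} (α : ZMod N) : Option (ZMod N) → Option (ZMod N) → Option (ZMod N)
  | none, x => x
  | some a, none => some a
  | some a, some b => if a + b = 0 then none else some ((a * b + α ^ 2) * (a + b)⁻¹)

/-- The map `ψ : G_α → (Z/NZ)ˣ`, `∞ ↦ 1`, `[a] ↦ (a+α)(a-α)⁻¹`. -/
def psiFn {N : ℕ} (α : ZMod N) : Option (ZMod N) → ZMod N
  | none => 1
  | some a => (a + α) * (a - α)⁻¹

/-- For an odd prime `N` and `α ≠ 0`, the set `G_α = {∞} ∪ {a : a ≠ ±α}` is closed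
under the operation, and `ψ` is a group isomorphism from `G_α` onto the multiplicative
group `(Z/NZ)ˣ` (the nonzero residues): it is bijective and multiplicative. -/
theorem psi_group_isomorphism {N : ℕ} (hN : N.Prime) (hodd : Odd N)
    (α : ZMod N) (hα : α ^ 2 ≠ 0) :
    (∀ x ∈ {x : Option (ZMod N) | ∀ a, x = some a → a ≠ α ∧ a ≠ -α},
      ∀ y ∈ {x : Option (ZMod N) | ∀ a, x = some a → a ≠ α ∧ a ≠ -α},
        gmulFn α x y ∈ {x : Option (ZMod N) | ∀ a, x = some a → a ≠ α ∧ a ≠ -α}) ∧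
    Set.BijOn (psiFn α) {x : Option (ZMod N) | ∀ a, x = some a → a ≠ α ∧ a ≠ -α}
      {z : ZMod N | z ≠ 0} ∧
    (∀ x ∈ {x : Option (ZMod N) | ∀ a, x = some a → a ≠ α ∧ a ≠ -α},
      ∀ y ∈ {x : Option (ZMod N) | ∀ a, x = some a → a ≠ α ∧ a ≠ -α},
        psiFn α (gmulFn α x y) = psiFn α x * psiFn α y) := by
  haveI := Fact.mk hN
  have hα0 : α ≠ 0 := fun h => hα (by simp [h])
  have h2 : (2 : ZMod N) ≠ 0 := by
    intro h
    have hd : (N : ℕ) ∣ 2 := (CharP.cast_eq_zero_iff (ZMod N) N 2).mp (by exact_mod_cast h)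
    have hN2 : N = 2 := (Nat.prime_dvd_prime_iff_eq hN Nat.prime_two).mp hd
    rw [hN2] at hodd
    exact (by decide : ¬ Odd 2) hodd
  have hclosed : ∀ a b : ZMod N, a ≠ α → a ≠ -α → b ≠ α → b ≠ -α → a + b ≠ 0 →
      ((a * b + α ^ 2) * (a + b)⁻¹ ≠ α ∧ (a * b + α ^ 2) * (a + b)⁻¹ ≠ -α) := by
    intro a b ha1 ha2 hb1 hb2 hab
    constructor
    · intro h
      have h' : a * b + α ^ 2 = α * (a + b) := by
        field_simp at h
        linear_combination h
      exact mul_ne_zero (sub_ne_zero.mpr ha1) (sub_ne_zero.mpr hb1)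
        (by linear_combination h')
    · intro h
      have h' : a * b + α ^ 2 = -α * (a + b) := by
        field_simp at h
        linear_combination h
      have hap : a + α ≠ 0 := fun hh => ha2 (by linear_combination hh)
      have hbp : b + α ≠ 0 := fun hh => hb2 (by linear_combination hh)
      exact mul_ne_zero hap hbp (by linear_combination h')
  refine ⟨?_, ⟨?_, ?_, ?_⟩, ?_⟩
  · -- closure
    rintro (_ | a) hx (_ | b) hy
    · exact hx
    · exact hy
    · exact hx
    · obtain ⟨ha1, ha2⟩ := hx a rfl
      obtain ⟨hb1, hb2⟩ := hy b rfl
      simp only [gmulFn]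
      split
      · rintro c hc; cases hc
      · rename_i hab
        rintro c hc
        cases hc
        exact hclosed a b ha1 ha2 hb1 hb2 hab
  · -- MapsTo
    rintro (_ | a) hx
    · simpa [psiFn] using one_ne_zero
    · obtain ⟨ha1, _⟩ := hx a rfl
      have h1 : a + α ≠ 0 := by
        intro hh
        exact (hx a rfl).2 (by linear_combination hh)
      exact mul_ne_zero h1 (inv_ne_zero (sub_ne_zero.mpr ha1))
  · -- InjOn
    rintro (_ | a) hx (_ | b) hy h
    · rfl
    · exfalso
      obtain ⟨hb1, _⟩ := hy b rfl
      have hbs : b - α ≠ 0 := sub_ne_zero.mpr hb1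
      simp only [psiFn] at h
      field_simp at h
      exact mul_ne_zero h2 hα0 (by linear_combination -h)
    · exfalso
      obtain ⟨ha1, _⟩ := hx a rfl
      have has : a - α ≠ 0 := sub_ne_zero.mpr ha1
      simp only [psiFn] at h
      field_simp at h
      exact mul_ne_zero h2 hα0 (by linear_combination h)
    · obtain ⟨ha1, _⟩ := hx a rfl
      obtain ⟨hb1, _⟩ := hy b rfl
      have has : a - α ≠ 0 := sub_ne_zero.mpr ha1
      have hbs : b - α ≠ 0 := sub_ne_zero.mpr hb1
      simp only [psiFn] at h
      field_simp at h
      have hba : (2 * α) * (b - a) = 0 := by linear_combination h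
      have : b - a = 0 := by
        rcases mul_eq_zero.mp hba with h' | h'
        · exact absurd h' (mul_ne_zero h2 hα0)
        · exact h'
      have : a = b := by linear_combination -this
      rw [this]
  · -- SurjOn
    rintro z hz
    have hz0 : z ≠ 0 := hz
    by_cases hz1 : z = 1
    · refine ⟨none, ?_, ?_⟩
      · rintro c hc; cases hc
      · simp [psiFn, hz1]
    · have hz1' : z - 1 ≠ 0 := sub_ne_zero.mpr hz1
      refine ⟨some (α * (z + 1) * (z - 1)⁻¹), ?_, ?_⟩
      · rintro c hc
        cases hc
        constructor
        · intro h
          field_simp at h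
          exact mul_ne_zero h2 hα0 (by linear_combination α * h)
        · intro h
          field_simp at h
          exact mul_ne_zero (mul_ne_zero h2 hα0) hz0 (by linear_combination α * h)
      · have haα : α * (z + 1) * (z - 1)⁻¹ - α ≠ 0 := by
          intro h
          field_simp at h
          exact mul_ne_zero h2 hα0 (by linear_combination h)
        simp only [psiFn]
        have e1 : α * (z + 1) * (z - 1)⁻¹ + α = 2 * α * z * (z - 1)⁻¹ := by
          field_simp; ring
        have e2 : α * (z + 1) * (z - 1)⁻¹ - α = 2 * α * (z - 1)⁻¹ := by
          field_simp; ring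
        rw [e1, e2]
        field_simp
  · -- multiplicative
    rintro (_ | a) hx (_ | b) hy
    · simp [gmulFn, psiFn]
    · simp [gmulFn, psiFn]
    · simp [gmulFn, psiFn]
    · obtain ⟨ha1, ha2⟩ := hx a rfl
      obtain ⟨hb1, hb2⟩ := hy b rfl
      have has : a - α ≠ 0 := sub_ne_zero.mpr ha1
      have hbs : b - α ≠ 0 := sub_ne_zero.mpr hb1
      simp only [gmulFn]
      split
      · rename_i hab
        have hb : b = -a := by linear_combination hab
        subst hb
        simp only [psiFn]
        field_simp
        ring
      · rename_i hab
        obtain ⟨hc1, _⟩ := hclosed a b ha1 ha2 hb1 hb2 hab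
        have hcs : (a * b + α ^ 2) * (a + b)⁻¹ - α ≠ 0 := sub_ne_zero.mpr hc1
        simp only [psiFn]
        have e1 : (a * b + α ^ 2) * (a + b)⁻¹ + α = (a + α) * (b + α) * (a + b)⁻¹ := by
          field_simp; ring
        have e2 : (a * b + α ^ 2) * (a + b)⁻¹ - α = (a - α) * (b - α) * (a + b)⁻¹ := by
          field_simp; ring
        rw [e1, e2]
        field_simp
end

section
/- Let N be an integer, β an integer with 0 < β < N, and a₁, a₂ integers with a₁² ≢ β (mod N) and a₂² ≢ β (mod N). If a ≡ (a₁a₂ + β)(a₁ + a₂)^(-1) (mod N) satisfies a² ≡ β (mod N) (where a₁ + a₂ is invertible mod N), then N is composite. -/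
/-- If `0 < β < N`, `a₁² ≢ β`, `a₂² ≢ β (mod N)`, `a₁ + a₂` is invertible mod `N`, and
`a = (a₁a₂ + β)(a₁+a₂)⁻¹` satisfies `a² ≡ β (mod N)`, then `N` is composite. -/
theorem composite_of_sqrt_found (N : ℕ) (β a₁ a₂ : ℤ) (hβ : 0 < β) (hβN : β < N)
    (h1 : ((a₁ : ZMod N)) ^ 2 ≠ (β : ZMod N)) (h2 : ((a₂ : ZMod N)) ^ 2 ≠ (β : ZMod N))
    (hu : IsUnit ((a₁ : ZMod N) + (a₂ : ZMod N)))
    (ha : (((a₁ : ZMod N) * a₂ + β) * ((a₁ : ZMod N) + a₂)⁻¹) ^ 2 = (β : ZMod N)) :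
    ¬ N.Prime := by
  intro hp
  haveI := Fact.mk hp
  set x := (a₁ : ZMod N)
  set y := (a₂ : ZMod N)
  set b := (β : ZMod N)
  have hxy : x + y ≠ 0 := hu.ne_zero
  have key : (x * y + b) ^ 2 = b * (x + y) ^ 2 := by
    have := congrArg (· * (x + y) ^ 2) ha
    simpa [mul_pow, mul_assoc, inv_pow, inv_mul_cancel₀ (pow_ne_zero 2 hxy)] using this
  have hz : (x ^ 2 - b) * (y ^ 2 - b) = 0 := by
    have : (x ^ 2 - b) * (y ^ 2 - b) = (x * y + b) ^ 2 - b * (x + y) ^ 2 := by ring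
    rw [this, key, sub_self]
  rcases mul_eq_zero.mp hz with h | h
  · exact h1 (by linear_combination h)
  · exact h2 (by linear_combination h)
end

section
/- Let N be an odd prime, β a quadratic residue mod N with β ≡ α² (mod N), and b an integer with b² ≡ -1 (mod N). If a is an integer representing an element of order exactly 4 in the group G_α, then a(b-1)(b+1)^(-1) ≡ ±α (mod N); in particular (a(b-1)(b+1)^(-1))² ≡ β (mod N). -/
/-- Let `N` be an odd prime, `β ≡ α² (mod N)`, and `b² ≡ -1 (mod N)`. If `[a]` has
order exactly 4 in `G_α` (its square is not the identity `∞` but its fourth power is),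
then `a(b-1)(b+1)⁻¹ ≡ ±α (mod N)`; in particular `(a(b-1)(b+1)⁻¹)² ≡ β (mod N)`. -/
theorem order_four_gives_sqrt {N : ℕ} (hN : N.Prime) (hodd : Odd N)
    (α β b a : ZMod N) (hβ : β = α ^ 2) (hb : b ^ 2 = -1)
    (ha : a ≠ α ∧ a ≠ -α)
    (h2 : gmulFn α (some a) (some a) ≠ none)
    (h4 : gmulFn α (gmulFn α (some a) (some a)) (gmulFn α (some a) (some a)) = none) :
    (a * (b - 1) * (b + 1)⁻¹ = α ∨ a * (b - 1) * (b + 1)⁻¹ = -α) ∧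
      (a * (b - 1) * (b + 1)⁻¹) ^ 2 = β := by
  haveI : Fact N.Prime := ⟨hN⟩
  have h2' : (2 : ZMod N) ≠ 0 := by
    intro h
    have : (N : ℕ) ∣ 2 := by
      have := (ZMod.natCast_eq_zero_iff 2 N).mp (by exact_mod_cast h)
      exact this
    have hN2 := (Nat.prime_dvd_prime_iff_eq hN Nat.prime_two).mp this
    rw [hN2] at hodd
    simp [Nat.odd_iff] at hodd
  -- a + a ≠ 0
  have haa : a + a ≠ 0 := by
    intro h
    apply h2
    simp [gmulFn, h]
  -- unfold the square
  have hsq : gmulFn α (some a) (some a)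
      = some ((a * a + α ^ 2) * (a + a)⁻¹) := by
    simp [gmulFn, haa]
  rw [hsq] at h4
  set s : ZMod N := (a * a + α ^ 2) * (a + a)⁻¹ with hs
  have hs0 : s = 0 := by
    by_cases h : s + s = 0
    · have : (2 : ZMod N) * s = 0 := by ring_nf; linear_combination h
      rcases mul_eq_zero.mp this with h' | h'
      · exact absurd h' h2'
      · exact h'
    · simp [gmulFn, h] at h4
  have hnum : a * a + α ^ 2 = 0 := by
    have hinv : (a + a)⁻¹ ≠ 0 := inv_ne_zero haa
    rcases mul_eq_zero.mp (hs ▸ hs0) with h' | h'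
    · exact h'
    · exact absurd h' hinv
  -- so a² = -α² = b²α², hence a = ± b α
  have hfac : (a - b * α) * (a + b * α) = 0 := by
    have : a ^ 2 = b ^ 2 * α ^ 2 := by rw [hb]; linear_combination hnum
    ring_nf
    linear_combination this
  have hbp1 : b + 1 ≠ 0 := by
    intro h
    have hb' : b = -1 := by linear_combination h
    rw [hb'] at hb
    have : (2 : ZMod N) = 0 := by linear_combination hb
    exact h2' this
  have hmain : a * (b - 1) * (b + 1)⁻¹ = α ∨ a * (b - 1) * (b + 1)⁻¹ = -α := by
    rcases mul_eq_zero.mp hfac with h' | h'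
    · -- a = b α : result is -α since b(b-1) = -(b+1)
      right
      have ha' : a = b * α := by linear_combination h'
      rw [ha']
      field_simp
      linear_combination α * hb
    · left
      have ha' : a = -(b * α) := by linear_combination h'
      rw [ha']
      field_simp
      linear_combination -α * hb
  refine ⟨hmain, ?_⟩
  rcases hmain with h | h <;> rw [h, hβ] <;> ring
end

section
/- Let p = 2^(e')·t' + 1 be an odd prime with t' odd and e' ≥ 1, and let d be a positive divisor of t'. Then the sum of v₂(ord_p(a)) over all integers a with 1 < a < p-1 and a^(2d) ≢ 1 (mod p) equals (e'-1)(p-1) + t' - d. -/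
open Finset

/-- In a finite cyclic group, the number of solutions of `x ^ m = 1` is exactly `m`
when `m` divides the order of the group. -/
lemma aux_card_pow_eq_one {G : Type*} [Group G] [Fintype G] [IsCyclic G] [DecidableEq G]
    {m : ℕ} (hm : m ∣ Fintype.card G) :
    (Finset.univ.filter fun x : G => x ^ m = 1).card = m := by
  have hm0 : 0 < m := Nat.pos_of_dvd_of_pos hm Fintype.card_pos
  refine le_antisymm (IsCyclic.card_pow_eq_one_le hm0) ?_
  obtain ⟨g, hg⟩ := IsCyclic.exists_generator (α := G)
  obtain ⟨k, hk⟩ := hm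
  have hk0 : 0 < k := by
    have := Fintype.card_pos (α := G)
    rw [hk] at this
    exact Nat.pos_of_ne_zero (by rintro rfl; simp at this)
  have hord : orderOf (g ^ k) = m := by
    rw [orderOf_pow, orderOf_eq_card_of_forall_mem_zpowers hg, Nat.card_eq_fintype_card, hk,
      Nat.gcd_eq_right ⟨m, by ring⟩, Nat.mul_div_cancel _ hk0]
  haveI : Fintype ((Subgroup.zpowers (g ^ k) : Subgroup G) : Set G) := Fintype.ofFinite _
  have hsub : ((Subgroup.zpowers (g ^ k) : Subgroup G) : Set G).toFinset ⊆
      Finset.univ.filter fun x : G => x ^ m = 1 := by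
    intro x hx
    simp only [Set.mem_toFinset, SetLike.mem_coe, Subgroup.mem_zpowers_iff] at hx
    obtain ⟨i, hi⟩ := hx
    have h1 : (g ^ k) ^ m = 1 := by rw [← hord]; exact pow_orderOf_eq_one _
    subst hi
    simp only [mem_filter, mem_univ, true_and]
    rw [← zpow_natCast ((g ^ k) ^ i) m, ← zpow_mul, mul_comm i (m : ℤ), zpow_mul,
      zpow_natCast, h1, one_zpow]
  calc m = orderOf (g ^ k) := hord.symm
    _ = Nat.card (Subgroup.zpowers (g ^ k)) := (Nat.card_zpowers _).symm
    _ = ((Subgroup.zpowers (g ^ k) : Subgroup G) : Set G).toFinset.card := by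
        simp [Set.toFinset_card, ← Nat.card_eq_fintype_card]
    _ ≤ _ := Finset.card_le_card hsub

/-- For `n ∣ 2^e * t` with `t` odd and `1 ≤ j`, `n` is not divisible by `2^j` iff
`n` divides `2^(j-1) * t`. -/
lemma aux_not_two_pow_dvd {n j e t : ℕ} (ht : Odd t) (hn : n ∣ 2 ^ e * t) (hn0 : n ≠ 0)
    (hj : 1 ≤ j) : (¬ 2 ^ j ∣ n) ↔ n ∣ 2 ^ (j - 1) * t := by
  have ht2 : ¬ (2 ∣ t) := by have := Nat.odd_iff.mp ht; omega
  constructor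
  · intro h
    set v := n.factorization 2 with hv
    have hle : v ≤ j - 1 := by
      by_contra hc
      exact h ((Nat.Prime.pow_dvd_iff_le_factorization Nat.prime_two hn0).mpr (by omega))
    have hself : 2 ^ v * (n / 2 ^ v) = n := Nat.ordProj_mul_ordCompl_eq_self n 2
    have hmodd : ¬ 2 ∣ (n / 2 ^ v) := Nat.not_dvd_ordCompl Nat.prime_two hn0
    have hcop : Nat.Coprime (n / 2 ^ v) (2 ^ e) :=
      Nat.Coprime.pow_right _ (((Nat.prime_two.coprime_iff_not_dvd).mpr hmodd).symm)
    have hmdvd : (n / 2 ^ v) ∣ t := by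
      refine hcop.dvd_of_dvd_mul_left ?_
      exact dvd_trans (Dvd.intro_left _ hself) hn
    calc n = 2 ^ v * (n / 2 ^ v) := hself.symm
      _ ∣ 2 ^ (j - 1) * t := mul_dvd_mul (pow_dvd_pow 2 hle) hmdvd
  · intro h hc
    have : 2 ^ (j - 1) * 2 ∣ 2 ^ (j - 1) * t := by
      calc 2 ^ (j - 1) * 2 = 2 ^ j := by rw [← pow_succ]; congr 1; omega
        _ ∣ n := hc
        _ ∣ _ := h
    exact ht2 ((mul_dvd_mul_iff_left (by positivity : (2:ℕ) ^ (j-1) ≠ 0)).mp this)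

lemma aux_geom : ∀ n : ℕ, ∑ i ∈ Finset.range n, 2 ^ i = 2 ^ n - 1 := by
  intro n
  induction n with
  | zero => simp
  | succ n ih =>
    rw [Finset.sum_range_succ, ih, pow_succ]
    have : 1 ≤ 2 ^ n := Nat.one_le_two_pow
    omega

lemma aux_final (A B N t d : ℕ) (h1 : B + t = N) (h2 : d ≤ t) :
    (A + N) - (B + d) = A + t - d := by omega

section main

variable (p e' t' d : ℕ) [Fact p.Prime]

-- Step A: transfer the sum to the unit group
lemma aux_transfer (hp : p.Prime) :
    ∑ a ∈ (Finset.Ioo 1 (p - 1)).filter (fun a : ℕ => ((a : ZMod p)) ^ (2 * d) ≠ 1),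
        padicValNat 2 (orderOf ((a : ZMod p))) =
    ∑ u ∈ Finset.univ.filter (fun u : (ZMod p)ˣ => u ^ (2 * d) ≠ 1),
        padicValNat 2 (orderOf u) := by
  have hp1 : 1 < p := hp.one_lt
  refine Finset.sum_bij' (i := fun a ha => Units.mk0 (a : ZMod p) ?_)
    (j := fun u hu => (u : ZMod p).val) ?_ ?_ ?_ ?_ ?_
  · -- (a : ZMod p) ≠ 0
    simp only [mem_filter, mem_Ioo] at ha
    intro h0
    have := (ZMod.natCast_eq_zero_iff a p).mp h0
    have := Nat.le_of_dvd (by omega) this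
    omega
  · -- membership forward
    intro a ha
    simp only [mem_filter, mem_Ioo] at ha ⊢
    refine ⟨mem_univ _, fun h => ha.2 ?_⟩
    have := congrArg (Units.val) h
    simpa using this
  · -- membership backward
    intro u hu
    simp only [mem_filter, mem_Ioo] at hu ⊢
    have hvlt : (u : ZMod p).val < p := ZMod.val_lt _
    have hcast : (((u : ZMod p).val : ℕ) : ZMod p) = (u : ZMod p) := by
      rw [ZMod.natCast_val, ZMod.cast_id]
    have hne0 : (u : ZMod p).val ≠ 0 := by
      intro h
      have : (u : ZMod p) = 0 := by rwa [ZMod.val_eq_zero] at h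
      exact u.ne_zero this
    have hne1 : (u : ZMod p).val ≠ 1 := by
      intro h
      have : (u : ZMod p) = 1 := by rw [← hcast, h, Nat.cast_one]
      exact hu.2 (by rw [Units.ext_iff]; simp [this])
    have hnep : (u : ZMod p).val ≠ p - 1 := by
      intro h
      have hm1 : ((p - 1 : ℕ) : ZMod p) = -1 := by
        have : ((p - 1 : ℕ) : ZMod p) = (p : ℕ) - 1 := by
          push_cast [Nat.cast_sub (by omega : 1 ≤ p)]; ring
        rw [this, ZMod.natCast_self, zero_sub]
      have : (u : ZMod p) = -1 := by rw [← hcast, h, hm1]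
      have hu1 : u = -1 := by rw [Units.ext_iff]; simp [this]
      apply hu.2
      rw [hu1, pow_mul, neg_one_sq, one_pow]
    refine ⟨⟨by omega, by omega⟩, ?_⟩
    rw [hcast]
    intro h
    exact hu.2 (by rw [Units.ext_iff]; simpa using h)
  · -- left inverse
    intro a ha
    simp only [mem_filter, mem_Ioo] at ha
    simp [ZMod.val_natCast_of_lt (by omega : a < p)]
  · -- right inverse
    intro u hu
    rw [Units.ext_iff]
    simp [ZMod.natCast_val, ZMod.cast_id]
  · -- values agree
    intro a ha
    rw [← orderOf_units, Units.val_mk0]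


end main

lemma aux_count2 (p e' t' d : ℕ) [Fact p.Prime]
    (ht : Odd t') (he : 1 ≤ e') (hcard : Fintype.card (ZMod p)ˣ = 2 ^ e' * t')
    (hd : d ∣ t') (j : ℕ) (hj1 : 1 ≤ j) (hje : j ≤ e') :
    ((Finset.univ.filter (fun u : (ZMod p)ˣ => u ^ (2 * d) ≠ 1)).filter
        (fun u => 2 ^ j ∣ orderOf u)).card
      = 2 ^ e' * t' - (2 ^ (j - 1) * t' + if j = 1 then d else 0) := by
  have ht2 : ¬ 2 ∣ t' := by have := Nat.odd_iff.mp ht; omega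
  have hd2 : ¬ 2 ∣ d := fun h => ht2 (h.trans hd)
  -- card of {u | 2^j ∣ orderOf u}
  have hA : (Finset.univ.filter (fun u : (ZMod p)ˣ => 2 ^ j ∣ orderOf u)).card
      + 2 ^ (j - 1) * t' = 2 ^ e' * t' := by
    have hcompl : Finset.univ.filter (fun u : (ZMod p)ˣ => ¬ 2 ^ j ∣ orderOf u)
        = Finset.univ.filter (fun u : (ZMod p)ˣ => u ^ (2 ^ (j - 1) * t') = 1) := by
      ext u
      simp only [mem_filter, mem_univ, true_and]
      rw [aux_not_two_pow_dvd ht (hcard ▸ orderOf_dvd_card) (orderOf_pos u).ne' hj1,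
        orderOf_dvd_iff_pow_eq_one]
    have h1 := Finset.card_filter_add_card_filter_not
      (s := (Finset.univ : Finset (ZMod p)ˣ)) (p := fun u => 2 ^ j ∣ orderOf u)
    rw [hcompl, aux_card_pow_eq_one
      (by rw [hcard]; exact mul_dvd_mul (pow_dvd_pow 2 (by omega)) dvd_rfl),
      Finset.card_univ, hcard] at h1
    exact h1
  -- card of {u | u^(2d) = 1 ∧ 2^j ∣ orderOf u}
  have hB : (Finset.univ.filter (fun u : (ZMod p)ˣ => u ^ (2 * d) = 1 ∧ 2 ^ j ∣ orderOf u)).card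
      = if j = 1 then d else 0 := by
    by_cases hj : j = 1
    · subst hj
      rw [if_pos rfl]
      have hBcard : (Finset.univ.filter (fun u : (ZMod p)ˣ => u ^ (2 * d) = 1)).card = 2 * d := by
        refine aux_card_pow_eq_one ?_
        rw [hcard]
        exact mul_dvd_mul (dvd_trans (by norm_num) (pow_dvd_pow 2 he)) hd
      have hsplit := Finset.card_filter_add_card_filter_not
        (s := Finset.univ.filter (fun u : (ZMod p)ˣ => u ^ (2 * d) = 1))
        (p := fun u => 2 ^ 1 ∣ orderOf u)
      have hodd : (Finset.univ.filter (fun u : (ZMod p)ˣ => u ^ (2 * d) = 1)).filter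
          (fun u => ¬ 2 ^ 1 ∣ orderOf u)
          = Finset.univ.filter (fun u : (ZMod p)ˣ => u ^ d = 1) := by
        ext u
        simp only [Finset.filter_filter, mem_filter, mem_univ, true_and, pow_one]
        constructor
        · rintro ⟨h1, h2⟩
          have hord : orderOf u ∣ 2 * d := orderOf_dvd_of_pow_eq_one h1
          have hcop : Nat.Coprime (orderOf u) 2 :=
            ((Nat.prime_two.coprime_iff_not_dvd).mpr h2).symm
          have : orderOf u ∣ d := hcop.dvd_of_dvd_mul_left hord
          exact orderOf_dvd_iff_pow_eq_one.mp this
        · intro h1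
          have hord : orderOf u ∣ d := orderOf_dvd_of_pow_eq_one h1
          refine ⟨?_, fun hc => hd2 (hc.trans hord)⟩
          rw [mul_comm, pow_mul, h1, one_pow]
      have hdcard : (Finset.univ.filter (fun u : (ZMod p)ˣ => u ^ d = 1)).card = d := by
        refine aux_card_pow_eq_one ?_
        rw [hcard]
        exact (hd.trans (dvd_mul_left t' _))
      have heq : (Finset.univ.filter (fun u : (ZMod p)ˣ => u ^ (2 * d) = 1)).filter
          (fun u => 2 ^ 1 ∣ orderOf u)
          = Finset.univ.filter (fun u : (ZMod p)ˣ => u ^ (2 * d) = 1 ∧ 2 ^ 1 ∣ orderOf u) := by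
        rw [Finset.filter_filter]
      rw [heq] at hsplit
      rw [hodd, hdcard, hBcard] at hsplit
      omega
    · rw [if_neg hj, Finset.card_eq_zero, Finset.filter_eq_empty_iff]
      intro u _
      rintro ⟨h1, h2⟩
      have hord : orderOf u ∣ 2 * d := orderOf_dvd_of_pow_eq_one h1
      have h4 : (2 : ℕ) * 2 ∣ 2 * d := by
        calc (2 : ℕ) * 2 = 2 ^ 2 := by norm_num
          _ ∣ 2 ^ j := pow_dvd_pow 2 (by omega)
          _ ∣ orderOf u := h2
          _ ∣ 2 * d := hord
      exact hd2 ((mul_dvd_mul_iff_left (two_ne_zero)).mp h4)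
  -- assemble
  have hsplit2 := Finset.card_filter_add_card_filter_not
    (s := Finset.univ.filter (fun u : (ZMod p)ˣ => 2 ^ j ∣ orderOf u))
    (p := fun u => u ^ (2 * d) ≠ 1)
  have e1 : (Finset.univ.filter (fun u : (ZMod p)ˣ => 2 ^ j ∣ orderOf u)).filter
      (fun u => u ^ (2 * d) ≠ 1)
      = (Finset.univ.filter (fun u : (ZMod p)ˣ => u ^ (2 * d) ≠ 1)).filter
        (fun u => 2 ^ j ∣ orderOf u) := by
    rw [Finset.filter_filter, Finset.filter_filter]
    exact Finset.filter_congr (fun u _ => by tauto)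
  have e2 : (Finset.univ.filter (fun u : (ZMod p)ˣ => 2 ^ j ∣ orderOf u)).filter
      (fun u => ¬ u ^ (2 * d) ≠ 1)
      = Finset.univ.filter (fun u : (ZMod p)ˣ => u ^ (2 * d) = 1 ∧ 2 ^ j ∣ orderOf u) := by
    rw [Finset.filter_filter]
    exact Finset.filter_congr (fun u _ => by tauto)
  rw [e1, e2, hB] at hsplit2
  by_cases hj : j = 1
  · subst hj; rw [if_pos rfl] at hsplit2 ⊢; omega
  · rw [if_neg hj] at hsplit2 ⊢; omega


/-- For an odd prime `p = 2^e' · t' + 1` with `t'` odd, `e' ≥ 1`, and `d` a positive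
divisor of `t'`, the sum of the 2-adic valuations of the orders of all `a` with
`1 < a < p - 1` and `a^(2d) ≢ 1 (mod p)` is `(e'-1)(p-1) + t' - d`. -/
theorem sum_two_adic_valuation_of_orders (p e' t' d : ℕ) (hp : p.Prime)
    (ht : Odd t') (he : 1 ≤ e') (hpe : p = 2 ^ e' * t' + 1)
    (hdpos : 0 < d) (hd : d ∣ t') :
    ∑ a ∈ (Finset.Ioo 1 (p - 1)).filter (fun a : ℕ => ((a : ZMod p)) ^ (2 * d) ≠ 1),
        padicValNat 2 (orderOf ((a : ZMod p))) =
      (e' - 1) * (p - 1) + t' - d := by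
  haveI : Fact p.Prime := ⟨hp⟩
  have htpos : 0 < t' := ht.pos
  have hcard : Fintype.card (ZMod p)ˣ = 2 ^ e' * t' := by
    rw [ZMod.card_units_eq_totient, Nat.totient_prime hp]
    omega
  rw [aux_transfer p d hp]
  -- rewrite each summand as a count of exponents
  have hsummand : ∀ u ∈ Finset.univ.filter (fun u : (ZMod p)ˣ => u ^ (2 * d) ≠ 1),
      padicValNat 2 (orderOf u)
        = ((Finset.Ico 1 (e' + 1)).filter (fun j => 2 ^ j ∣ orderOf u)).card := by
    intro u _
    have hn0 : orderOf u ≠ 0 := (orderOf_pos u).ne'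
    have hnd : orderOf u ∣ 2 ^ e' * t' := hcard ▸ orderOf_dvd_card
    have hdvd_iff : ∀ j, (2 ^ j ∣ orderOf u ↔ j ≤ padicValNat 2 (orderOf u)) := fun j => by
      rw [Nat.Prime.pow_dvd_iff_le_factorization Nat.prime_two hn0,
        Nat.factorization_def _ Nat.prime_two]
    have hve : padicValNat 2 (orderOf u) ≤ e' := by
      by_contra hc
      have h2 : 2 ^ (e' + 1) ∣ orderOf u := (hdvd_iff (e' + 1)).mpr (by omega)
      have h3 : 2 ^ e' * 2 ∣ 2 ^ e' * t' := dvd_trans (by rw [← pow_succ]) (h2.trans hnd)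
      have h5 := (mul_dvd_mul_iff_left (a := (2:ℕ) ^ e') (by positivity)).mp h3
      have ht2 := Nat.odd_iff.mp ht
      omega
    have heq : (Finset.Ico 1 (e' + 1)).filter (fun j => 2 ^ j ∣ orderOf u)
        = Finset.Ico 1 (padicValNat 2 (orderOf u) + 1) := by
      ext j
      simp only [mem_filter, mem_Ico, hdvd_iff j]
      omega
    rw [heq, Nat.card_Ico]
    omega
  rw [Finset.sum_congr rfl hsummand]
  -- swap the two sums
  have hswap : ∑ u ∈ Finset.univ.filter (fun u : (ZMod p)ˣ => u ^ (2 * d) ≠ 1),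
      ((Finset.Ico 1 (e' + 1)).filter (fun j => 2 ^ j ∣ orderOf u)).card
      = ∑ j ∈ Finset.Ico 1 (e' + 1),
        ((Finset.univ.filter (fun u : (ZMod p)ˣ => u ^ (2 * d) ≠ 1)).filter
          (fun u => 2 ^ j ∣ orderOf u)).card := by
    simp only [Finset.card_filter]
    exact Finset.sum_comm
  rw [hswap]
  rw [Finset.sum_congr rfl (fun j hj => by
    simp only [mem_Ico] at hj
    exact aux_count2 p e' t' d ht he hcard hd j hj.1 (by omega))]
  have hd' : d ≤ t' := Nat.le_of_dvd htpos hd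
  have hbound : ∀ j ∈ Finset.Ico 1 (e' + 1),
      2 ^ (j - 1) * t' + (if j = 1 then d else 0) ≤ 2 ^ e' * t' := by
    intro j hj
    simp only [mem_Ico] at hj
    have hite : (if j = 1 then d else 0) ≤ t' := by split <;> omega
    have h3 : (2:ℕ) ^ (j - 1) + 1 ≤ 2 ^ e' := by
      have h6 := Nat.pow_le_pow_right (by norm_num : 1 ≤ 2) (show j - 1 ≤ e' - 1 by omega)
      have h4 : (2:ℕ) ^ (e' - 1) * 2 = 2 ^ e' := by rw [← pow_succ]; congr 1; omega
      have h7 := Nat.one_le_two_pow (n := e' - 1)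
      omega
    calc 2 ^ (j - 1) * t' + (if j = 1 then d else 0) ≤ 2 ^ (j - 1) * t' + t' :=
          Nat.add_le_add_left hite _
      _ = (2 ^ (j - 1) + 1) * t' := by ring
      _ ≤ 2 ^ e' * t' := Nat.mul_le_mul_right _ h3
  rw [Finset.sum_tsub_distrib _ hbound, Finset.sum_const, Nat.card_Ico, smul_eq_mul]
  have hsum2 : ∑ j ∈ Finset.Ico 1 (e' + 1), (2 ^ (j - 1) * t' + (if j = 1 then d else 0))
      = (2 ^ e' - 1) * t' + d := by
    rw [Finset.sum_add_distrib]
    congr 1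
    · rw [Finset.sum_Ico_eq_sum_range]
      simp only [Nat.add_sub_cancel]
      rw [Finset.sum_congr rfl (fun i _ => by
        show 2 ^ (1 + i - 1) * t' = 2 ^ i * t'
        congr 2
        omega), ← Finset.sum_mul, aux_geom]
    · rw [Finset.sum_ite_eq' (Finset.Ico 1 (e' + 1)) 1 (fun _ => d),
        if_pos (by simp only [mem_Ico]; omega)]
  rw [hsum2]
  -- final arithmetic
  obtain ⟨e, rfl⟩ : ∃ e, e' = e + 1 := ⟨e' - 1, by omega⟩
  have hN : p - 1 = 2 ^ (e + 1) * t' := by omega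
  simp only [Nat.add_sub_cancel]
  rw [hN]
  have hmul : (e + 1) * (2 ^ (e + 1) * t') = e * (2 ^ (e + 1) * t') + 2 ^ (e + 1) * t' := by ring
  have hB' : (2 ^ (e + 1) - 1) * t' + t' = 2 ^ (e + 1) * t' := by
    have h1 : (2:ℕ) ^ (e + 1) - 1 + 1 = 2 ^ (e + 1) := by
      have := Nat.one_le_two_pow (n := e + 1)
      omega
    calc (2 ^ (e + 1) - 1) * t' + t' = ((2 ^ (e + 1) - 1) + 1) * t' := by ring
      _ = 2 ^ (e + 1) * t' := by rw [h1]
  rw [hmul]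
  exact aux_final _ _ _ _ _ hB' hd'
end

section
/- Let p = 2^(e')·t' + 1 be an odd prime with t' odd and e' ≥ 1, and let d be a positive divisor of t'. If a is chosen uniformly at random from the integers in (1, p-1) satisfying a^(2d) ≢ 1 (mod p), then the expected value of v₂(ord_p(a)) is strictly greater than e' - 1. -/
open Finset

section
variable (p : ℕ) [Fact p.Prime]

lemma aux_card_roots {m : ℕ} (hm0 : 0 < m) (hm : m ∣ p - 1) :
    (Finset.univ.filter fun x : ZMod p => x ^ m = 1).card = m := by
  obtain ⟨g, hg⟩ := IsCyclic.exists_generator (α := (ZMod p)ˣ)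
  have hord : orderOf g = p - 1 := by
    rw [orderOf_eq_card_of_forall_mem_zpowers hg]
    simp [Nat.card_eq_fintype_card, ZMod.card_units, Nat.totient_prime (Fact.out : p.Prime)]
  have hprim : IsPrimitiveRoot g (p - 1) := hord ▸ IsPrimitiveRoot.orderOf g
  obtain ⟨c, hc⟩ := hm
  have hp1 : 0 < p - 1 := Nat.sub_pos_of_lt (Fact.out : p.Prime).one_lt
  have hζ : IsPrimitiveRoot (g ^ c) m := IsPrimitiveRoot.pow hp1 hprim (hc.trans (Nat.mul_comm m c))
  have hζ' : IsPrimitiveRoot ((g ^ c : (ZMod p)ˣ) : ZMod p) m :=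
    IsPrimitiveRoot.coe_units_iff.mpr hζ
  have : (Finset.univ.filter fun x : ZMod p => x ^ m = 1)
      = Polynomial.nthRootsFinset m (1 : ZMod p) := by
    ext x
    simp [Polynomial.mem_nthRootsFinset hm0 (1 : ZMod p)]
  rw [this, hζ'.card_nthRootsFinset]

lemma aux_val (e' t' : ℕ) (ht : Odd t') (hpe : p - 1 = 2 ^ e' * t')
    (x : ZMod p) (hx : x ≠ 0) :
    padicValNat 2 (orderOf x) =
      ∑ k ∈ Finset.range e', if x ^ (2 ^ k * t') = 1 then 0 else 1 := by
  have hp1 : 0 < p - 1 := Nat.sub_pos_of_lt (Fact.out : p.Prime).one_lt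
  have hdvd : orderOf x ∣ p - 1 :=
    orderOf_dvd_of_pow_eq_one (ZMod.pow_card_sub_one_eq_one hx)
  have hopos : 0 < orderOf x := Nat.pos_of_dvd_of_pos hdvd hp1
  set v := padicValNat 2 (orderOf x) with hv
  have hcop : Nat.Coprime 2 t' :=
    (Nat.Prime.coprime_iff_not_dvd Nat.prime_two).mpr (by
      rw [Nat.odd_iff] at ht; omega)
  have key : ∀ k : ℕ, x ^ (2 ^ k * t') = 1 ↔ v ≤ k := by
    intro k
    constructor
    · intro h
      have hod : orderOf x ∣ 2 ^ k * t' := orderOf_dvd_of_pow_eq_one h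
      have h2v : 2 ^ v ∣ orderOf x := pow_padicValNat_dvd
      have h2 : (2 : ℕ) ^ v ∣ 2 ^ k :=
        Nat.Coprime.dvd_of_dvd_mul_right (Nat.Coprime.pow_left v hcop) (h2v.trans hod)
      exact (Nat.pow_dvd_pow_iff_le_right one_lt_two).mp h2
    · intro h
      apply orderOf_dvd_iff_pow_eq_one.mp
      have hfact : 2 ^ v * (orderOf x / 2 ^ v) = orderOf x := by
        have := Nat.ordProj_mul_ordCompl_eq_self (orderOf x) 2
        rwa [Nat.factorization_def _ Nat.prime_two] at this
      have hmodd : ¬ 2 ∣ (orderOf x / 2 ^ v) := by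
        have := Nat.not_dvd_ordCompl Nat.prime_two hopos.ne'
        rwa [Nat.factorization_def _ Nat.prime_two] at this
      have hmdvd : (orderOf x / 2 ^ v) ∣ t' := by
        have h1 : (orderOf x / 2 ^ v) ∣ 2 ^ e' * t' :=
          dvd_trans (Dvd.intro_left _ hfact) (hpe ▸ hdvd)
        exact Nat.Coprime.dvd_of_dvd_mul_left
          (Nat.Coprime.pow_right e'
            ((Nat.Prime.coprime_iff_not_dvd Nat.prime_two).mpr hmodd).symm) h1
      calc orderOf x = 2 ^ v * (orderOf x / 2 ^ v) := hfact.symm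
        _ ∣ 2 ^ k * t' := mul_dvd_mul (pow_dvd_pow 2 h) hmdvd
  have hve : v ≤ e' := by
    have h2v : (2:ℕ) ^ v ∣ 2 ^ e' * t' := pow_padicValNat_dvd.trans (hpe ▸ hdvd)
    exact (Nat.pow_dvd_pow_iff_le_right one_lt_two).mp
      (Nat.Coprime.dvd_of_dvd_mul_right (Nat.Coprime.pow_left v hcop) h2v)
  have hfilt : (Finset.range e').filter (fun k => k < v) = Finset.range v := by
    ext k
    simp only [Finset.mem_filter, Finset.mem_range]
    omega
  calc v = ((Finset.range e').filter (fun k => k < v)).card := by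
        rw [hfilt, Finset.card_range]
    _ = ∑ k ∈ Finset.range e', if x ^ (2 ^ k * t') = 1 then 0 else 1 := by
        rw [Finset.card_filter]
        refine Finset.sum_congr rfl fun k _ => ?_
        rcases le_or_gt v k with h | h
        · simp [key k, h, Nat.not_lt.mpr h]
        · simp [key k, Nat.not_le.mpr h, h]

end

/-- For an odd prime `p = 2^e' · t' + 1` with `t'` odd, `e' ≥ 1`, and `d` a positive
divisor of `t'`: the average (expected value under the uniform distribution) of
`v₂(ord_p(a))` over the integers `a ∈ (1, p-1)` with `a^(2d) ≢ 1 (mod p)` is strictly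
greater than `e' - 1`. -/
theorem expected_two_adic_valuation (p e' t' d : ℕ) (hp : p.Prime)
    (ht : Odd t') (he : 1 ≤ e') (hpe : p = 2 ^ e' * t' + 1)
    (hdpos : 0 < d) (hd : d ∣ t')
    (hne : ((Finset.Ioo 1 (p - 1)).filter
      (fun a : ℕ => ((a : ZMod p)) ^ (2 * d) ≠ 1)).Nonempty) :
    ((e' : ℚ) - 1) <
      (∑ a ∈ (Finset.Ioo 1 (p - 1)).filter
          (fun a : ℕ => ((a : ZMod p)) ^ (2 * d) ≠ 1),
            (padicValNat 2 (orderOf ((a : ZMod p))) : ℚ)) /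
        (((Finset.Ioo 1 (p - 1)).filter
          (fun a : ℕ => ((a : ZMod p)) ^ (2 * d) ≠ 1)).card : ℚ) := by
  haveI : Fact p.Prime := ⟨hp⟩
  classical
  have ht'pos : 0 < t' := ht.pos
  have hp1 : p - 1 = 2 ^ e' * t' := by omega
  have h2e : 2 ≤ 2 ^ e' := by
    calc 2 = 2 ^ 1 := rfl
    _ ≤ 2 ^ e' := Nat.pow_le_pow_right (by norm_num) he
  have hp3 : 3 ≤ p := by nlinarith [h2e, ht'pos]
  set L := (Finset.Ioo 1 (p - 1)).filter
      (fun a : ℕ => ((a : ZMod p)) ^ (2 * d) ≠ 1) with hL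
  set F : Finset (ZMod p) :=
      Finset.univ.filter (fun x : ZMod p => x ^ (2 * d) ≠ 1 ∧ x ≠ 0) with hF
  -- the bijection between L and F
  have hri : ∀ x : ZMod p, ((x.val : ℕ) : ZMod p) = x := fun x => ZMod.natCast_zmod_val x
  have hi : ∀ a ∈ L, ((a : ℕ) : ZMod p) ∈ F := by
    intro a ha
    rw [hL, Finset.mem_filter, Finset.mem_Ioo] at ha
    obtain ⟨⟨ha1, ha2⟩, hcond⟩ := ha
    rw [hF, Finset.mem_filter]
    refine ⟨Finset.mem_univ _, hcond, ?_⟩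
    rw [Ne, ZMod.natCast_eq_zero_iff]
    intro hdvd
    have := Nat.le_of_dvd (by omega) hdvd
    omega
  have hj : ∀ x ∈ F, x.val ∈ L := by
    intro x hx
    rw [hF, Finset.mem_filter] at hx
    obtain ⟨-, hcond, hx0⟩ := hx
    have hvlt : x.val < p := ZMod.val_lt x
    have hv0 : x.val ≠ 0 := fun h => hx0 ((ZMod.val_eq_zero x).mp h)
    have hv1 : x.val ≠ 1 := by
      intro h
      apply hcond
      have : x = 1 := by rw [← hri x, h, Nat.cast_one]
      rw [this, one_pow]
    have hvp1 : x.val ≠ p - 1 := by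
      intro h
      apply hcond
      have : x = -1 := by
        rw [← hri x, h]
        push_cast [Nat.cast_sub (by omega : 1 ≤ p)]
        simp [ZMod.natCast_self]
      rw [this, pow_mul, neg_one_sq, one_pow]
    rw [hL, Finset.mem_filter, Finset.mem_Ioo]
    exact ⟨⟨by omega, by omega⟩, by rw [hri x]; exact hcond⟩
  have hli : ∀ a ∈ L, ((a : ℕ) : ZMod p).val = a := by
    intro a ha
    rw [hL, Finset.mem_filter, Finset.mem_Ioo] at ha
    exact ZMod.val_cast_of_lt (by omega)
  have hri' : ∀ x ∈ F, ((x.val : ℕ) : ZMod p) = x := fun x _ => hri x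
  have hcard : L.card = F.card :=
    Finset.card_nbij' (fun a => ((a : ℕ) : ZMod p)) (fun x => x.val) hi hj hli hri'
  have hsum : (∑ a ∈ L, (padicValNat 2 (orderOf ((a : ZMod p))) : ℚ))
      = ∑ x ∈ F, (padicValNat 2 (orderOf x) : ℚ) :=
    Finset.sum_nbij' (fun a => ((a : ℕ) : ZMod p)) (fun x => x.val) hi hj hli hri'
      (fun a _ => rfl)
  -- counting roots
  have hcardR : ∀ m : ℕ, 0 < m → m ∣ p - 1 →
      (Finset.univ.filter fun x : ZMod p => x ^ m = 1).card = m :=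
    fun m h1 h2 => aux_card_roots p h1 h2
  have h2dvd : (2 : ℕ) ∣ 2 ^ e' := dvd_pow_self 2 (by omega)
  have h2d_dvd : 2 * d ∣ p - 1 := hp1 ▸ mul_dvd_mul h2dvd hd
  have hd_dvd : d ∣ p - 1 := dvd_trans (Dvd.intro_left 2 rfl) h2d_dvd
  -- cardinality of F
  set N := F.card with hNdef
  have hNcard : N + (2 * d + 1) = p := by
    have hsplit := Finset.card_filter_add_card_filter_not
      (s := (Finset.univ : Finset (ZMod p)))
      (p := fun x : ZMod p => x ^ (2 * d) ≠ 1 ∧ x ≠ 0)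
    have hneg : (Finset.univ.filter fun x : ZMod p => ¬(x ^ (2 * d) ≠ 1 ∧ x ≠ 0))
        = insert (0 : ZMod p) (Finset.univ.filter fun x : ZMod p => x ^ (2 * d) = 1) := by
      ext x
      simp only [Finset.mem_filter, Finset.mem_univ, true_and, Finset.mem_insert,
        not_and_or, not_not, not_ne_iff]
      tauto
    have h0notin : (0 : ZMod p) ∉ (Finset.univ.filter fun x : ZMod p => x ^ (2 * d) = 1) := by
      simp only [Finset.mem_filter, Finset.mem_univ, true_and]
      rw [zero_pow (by omega : 2 * d ≠ 0)]
      exact zero_ne_one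
    rw [hneg, Finset.card_insert_of_notMem h0notin,
      hcardR (2 * d) (by omega) h2d_dvd] at hsplit
    rw [Finset.card_univ, ZMod.card] at hsplit
    exact hsplit
  have hNpos : 0 < N := hcard ▸ Finset.card_pos.mpr hne
  -- the sum over F, in ℕ
  have hsumN : (∑ x ∈ F, padicValNat 2 (orderOf x))
      = ∑ k ∈ Finset.range e',
          (F.filter (fun x : ZMod p => ¬ x ^ (2 ^ k * t') = 1)).card := by
    rw [Finset.sum_congr rfl (fun x hx =>
      aux_val p e' t' ht hp1 x ((Finset.mem_filter.mp hx).2.2))]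
    rw [Finset.sum_comm]
    refine Finset.sum_congr rfl fun k _ => ?_
    rw [Finset.card_filter]
    refine Finset.sum_congr rfl fun x _ => ?_
    by_cases h : x ^ (2 ^ k * t') = 1 <;> simp [h]
  -- per-k cardinalities
  have hA : ∀ k, k < e' →
      (F.filter (fun x : ZMod p => x ^ (2 ^ k * t') = 1)).card
        + Nat.gcd (2 ^ k * t') (2 * d) = 2 ^ k * t' := by
    intro k hk
    set g := Nat.gcd (2 ^ k * t') (2 * d) with hgdef
    have hgdvd1 : g ∣ 2 ^ k * t' := Nat.gcd_dvd_left _ _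
    have hgdvd2 : g ∣ 2 * d := Nat.gcd_dvd_right _ _
    have hgpos : 0 < g := Nat.gcd_pos_of_pos_right _ (by omega)
    have hnkpos : 0 < 2 ^ k * t' := by positivity
    have hnkdvd : 2 ^ k * t' ∣ p - 1 :=
      hp1 ▸ mul_dvd_mul (pow_dvd_pow 2 hk.le) dvd_rfl
    have hset : F.filter (fun x : ZMod p => x ^ (2 ^ k * t') = 1)
        = (Finset.univ.filter fun x : ZMod p => x ^ (2 ^ k * t') = 1)
          \ (Finset.univ.filter fun x : ZMod p => x ^ g = 1) := by
      ext x
      simp only [hF, Finset.mem_filter, Finset.mem_sdiff, Finset.mem_univ, true_and]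
      constructor
      · rintro ⟨⟨hc, -⟩, hnk⟩
        refine ⟨hnk, fun hg1 => hc ?_⟩
        exact orderOf_dvd_iff_pow_eq_one.mp
          ((orderOf_dvd_of_pow_eq_one hg1).trans hgdvd2)
      · rintro ⟨hnk, hg1⟩
        have hx0 : x ≠ 0 := by
          rintro rfl
          rw [zero_pow hnkpos.ne'] at hnk
          exact zero_ne_one hnk
        refine ⟨⟨fun h2d1 => hg1 ?_, hx0⟩, hnk⟩
        exact orderOf_dvd_iff_pow_eq_one.mp
          (Nat.dvd_gcd (orderOf_dvd_of_pow_eq_one hnk) (orderOf_dvd_of_pow_eq_one h2d1))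
    have hsub : (Finset.univ.filter fun x : ZMod p => x ^ g = 1)
        ⊆ (Finset.univ.filter fun x : ZMod p => x ^ (2 ^ k * t') = 1) := by
      intro x hx
      simp only [Finset.mem_filter, Finset.mem_univ, true_and] at hx ⊢
      exact orderOf_dvd_iff_pow_eq_one.mp ((orderOf_dvd_of_pow_eq_one hx).trans hgdvd1)
    have hc := Finset.card_sdiff_add_card_eq_card hsub
    rw [hcardR g hgpos (hgdvd2.trans h2d_dvd)] at hc
    rw [hcardR (2 ^ k * t') hnkpos hnkdvd] at hc
    rw [hset]
    exact hc
  have hAB : ∀ k,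
      (F.filter (fun x : ZMod p => x ^ (2 ^ k * t') = 1)).card
      + (F.filter (fun x : ZMod p => ¬ x ^ (2 ^ k * t') = 1)).card = N :=
    fun k => Finset.card_filter_add_card_filter_not
      (p := fun x : ZMod p => x ^ (2 ^ k * t') = 1)
  -- gcd values
  have hcop2 : Nat.Coprime 2 t' :=
    (Nat.Prime.coprime_iff_not_dvd Nat.prime_two).mpr (by rw [Nat.odd_iff] at ht; omega)
  have hg0 : Nat.gcd (2 ^ 0 * t') (2 * d) = d := by
    rw [pow_zero, one_mul, Nat.Coprime.gcd_mul_left_cancel_right d hcop2,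
      Nat.gcd_eq_right hd]
  have hgk : ∀ k, 1 ≤ k → Nat.gcd (2 ^ k * t') (2 * d) = 2 * d := fun k hk =>
    Nat.gcd_eq_right (mul_dvd_mul (dvd_pow_self 2 (by omega)) hd)
  -- final arithmetic
  obtain ⟨m, rfl⟩ : ∃ m, e' = m + 1 := ⟨e' - 1, by omega⟩
  rw [hsum, hcard, lt_div_iff₀ (by exact_mod_cast hNpos)]
  have hcast : (∑ x ∈ F, (padicValNat 2 (orderOf x) : ℚ))
      = ((∑ k ∈ Finset.range (m + 1),
          (F.filter (fun x : ZMod p => ¬ x ^ (2 ^ k * t') = 1)).card : ℕ) : ℚ) := by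
    rw [← hsumN]
    push_cast
    rfl
  rw [hcast]
  push_cast
  have hBq : ∀ k ∈ Finset.range (m + 1),
      ((F.filter (fun x : ZMod p => ¬ x ^ (2 ^ k * t') = 1)).card : ℚ)
        = (N : ℚ) - 2 ^ k * t' + (Nat.gcd (2 ^ k * t') (2 * d) : ℚ) := by
    intro k hk
    rw [Finset.mem_range] at hk
    have h1' : ((F.filter (fun x : ZMod p => x ^ (2 ^ k * t') = 1)).card : ℚ)
        + (Nat.gcd (2 ^ k * t') (2 * d) : ℚ) = 2 ^ k * t' := by
      exact_mod_cast hA k hk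
    have h2' : ((F.filter (fun x : ZMod p => x ^ (2 ^ k * t') = 1)).card : ℚ)
        + ((F.filter (fun x : ZMod p => ¬ x ^ (2 ^ k * t') = 1)).card : ℚ) = N := by
      exact_mod_cast hAB k
    linarith
  rw [Finset.sum_congr rfl hBq, Finset.sum_range_succ']
  have hsummand : ∀ k ∈ Finset.range m,
      (N : ℚ) - 2 ^ (k + 1) * t' + (Nat.gcd (2 ^ (k + 1) * t') (2 * d) : ℚ)
        = ((N : ℚ) + 2 * d) - 2 * t' * 2 ^ k := by
    intro k _
    rw [hgk (k + 1) (by omega)]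
    push_cast
    ring
  rw [Finset.sum_congr rfl hsummand, hg0]
  have hge : ∑ k ∈ Finset.range m, (2 : ℚ) ^ k = 2 ^ m - 1 := by
    rw [geom_sum_eq (by norm_num : (2 : ℚ) ≠ 1)]
    norm_num
  rw [Finset.sum_sub_distrib, Finset.sum_const, Finset.card_range, ← Finset.mul_sum, hge,
    nsmul_eq_mul]
  have hNq : (N : ℚ) = 2 ^ (m + 1) * t' - 2 * d := by
    have h1 : (N : ℚ) + (2 * d + 1) = p := by exact_mod_cast hNcard
    have h2 : (p : ℚ) = 2 ^ (m + 1) * t' + 1 := by exact_mod_cast congrArg (Nat.cast (R := ℚ)) hpe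
    linarith
  have hdt : (d : ℚ) ≤ t' := by exact_mod_cast Nat.le_of_dvd ht'pos hd
  have hd1 : (1 : ℚ) ≤ d := by exact_mod_cast hdpos
  have hN0 : (0 : ℚ) < N := by exact_mod_cast hNpos
  rcases Nat.eq_zero_or_pos m with hm | hm
  · subst hm
    norm_num at hNq ⊢
    linarith
  · have hm1 : (1 : ℚ) ≤ m := by exact_mod_cast hm
    have h2dm : (2 : ℚ) ≤ 2 * d * m := by nlinarith
    rw [pow_succ] at hNq
    linarith
end
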